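/- On an open subset of ℝ³ with coordinates (x,u,u_1) where xu ≠ 0, the function I_2(x,u,u_1) = arctan(x(xu_1 + x² - u)/u) - 1/x is a first integral of the vector field A = ∂_x + u_1∂_u + (-(x(u_1+x))/u - u/x⁴ - 1)∂_{u_1} and of X_1 = ∂_u + ((u_1+x)/u)∂_{u_1}, i.e., A(I_2) = 0 and X_1(I_2) = 0. -/

import Mathlib

noncomputable section

/-- Points `(x, u, u₁)` of the first-order jet space, modelled as ℝ³. -/
abbrev R3 := ℝ × ℝ × ℝ

/-- Partial derivative with respect to the first coordinate `x`. -/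
def pX (f : R3 → ℝ) (p : R3) : ℝ := deriv (fun t => f (t, p.2.1, p.2.2)) p.1

/-- Partial derivative with respect to the second coordinate `u`. -/
def pU (f : R3 → ℝ) (p : R3) : ℝ := deriv (fun t => f (p.1, t, p.2.2)) p.2.1

/-- Partial derivative with respect to the third coordinate `u₁`. -/
def pV (f : R3 → ℝ) (p : R3) : ℝ := deriv (fun t => f (p.1, p.2.1, t)) p.2.2

/-- Lie bracket of vector fields on ℝ³. -/
def lieB (X Y : R3 → R3) : R3 → R3 :=
  fun p => fderiv ℝ Y p (X p) - fderiv ℝ X p (Y p)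

/-- on the open set where `x ≠ 0` and `u ≠ 0`, the function
`I₂(x,u,u₁) = arctan(x(xu₁ + x² - u)/u) - 1/x` is a first integral of both
`A = ∂_x + u₁∂_u + (-(x(u₁+x))/u - u/x⁴ - 1)∂_{u₁}` and
`X₁ = ∂_u + ((u₁+x)/u)∂_{u₁}`. -/
theorem first_integral_example_no_lie :
    ∀ p : R3, p.1 ≠ 0 → p.2.1 ≠ 0 →
      fderiv ℝ (fun q : R3 =>
          Real.arctan (q.1 * (q.1 * q.2.2 + q.1 ^ 2 - q.2.1) / q.2.1) - 1 / q.1) p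
          ((1, p.2.2, -(p.1 * (p.2.2 + p.1)) / p.2.1 - p.2.1 / p.1 ^ 4 - 1) : R3) = 0 ∧
      fderiv ℝ (fun q : R3 =>
          Real.arctan (q.1 * (q.1 * q.2.2 + q.1 ^ 2 - q.2.1) / q.2.1) - 1 / q.1) p
          ((0, 1, (p.2.2 + p.1) / p.2.1) : R3) = 0 := by

  intro p hx hu
  obtain ⟨x, u, v⟩ := p
  simp only at hx hu ⊢
  have h1 : HasFDerivAt (fun q : R3 => q.1)
      (ContinuousLinearMap.fst ℝ ℝ (ℝ × ℝ)) (x, u, v) := hasFDerivAt_fst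
  have h2 : HasFDerivAt (fun q : R3 => q.2.1)
      ((ContinuousLinearMap.fst ℝ ℝ ℝ).comp (ContinuousLinearMap.snd ℝ ℝ (ℝ × ℝ)))
      (x, u, v) := (hasFDerivAt_snd (𝕜 := ℝ) (E := ℝ) (F := ℝ × ℝ)).fst
  have h3 : HasFDerivAt (fun q : R3 => q.2.2)
      ((ContinuousLinearMap.snd ℝ ℝ ℝ).comp (ContinuousLinearMap.snd ℝ ℝ (ℝ × ℝ)))
      (x, u, v) := (hasFDerivAt_snd (𝕜 := ℝ) (E := ℝ) (F := ℝ × ℝ)).snd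
  have hN : HasFDerivAt (fun q : R3 => q.1 * (q.1 * q.2.2 + q.1 * q.1 - q.2.1)) _ (x, u, v) :=
    h1.mul (((h1.mul h3).add (h1.mul h1)).sub h2)
  have hiu : HasFDerivAt (fun q : R3 => (q.2.1)⁻¹) _ (x, u, v) :=
    (hasDerivAt_inv hu).comp_hasFDerivAt _ h2
  have hix : HasFDerivAt (fun q : R3 => (q.1)⁻¹) _ (x, u, v) :=
    (hasDerivAt_inv hx).comp_hasFDerivAt _ h1
  have hf := (hN.mul hiu).arctan.sub hix
  have hfd : fderiv ℝ (fun q : R3 => Real.arctan (q.1 * (q.1 * q.2.2 + q.1 * q.1 - q.2.1) * q.2.1⁻¹) - q.1⁻¹) (x, u, v) = _ := hf.fderiv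
  simp only [pow_two, div_eq_mul_inv, one_mul]
  rw [hfd]
  have hden : 1 + (x * (x * v + x ^ 2 - u) / u) ^ 2 ≠ 0 := by positivity
  constructor <;>
  · simp only [ContinuousLinearMap.sub_apply, ContinuousLinearMap.smul_apply,
      ContinuousLinearMap.add_apply, ContinuousLinearMap.coe_fst',
      ContinuousLinearMap.coe_snd', ContinuousLinearMap.coe_comp', Function.comp_apply,
      ContinuousLinearMap.smulRight_apply, ContinuousLinearMap.one_apply, smul_eq_mul, Pi.mul_apply]
    field_simp
    ring
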